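/- Let G be a second countable locally compact Hausdorff group acting freely and properly on a second countable locally compact Hausdorff space X. Then the quotient map p : X → X/G admits a full p-system: a family of Radon measures (β^{ẋ})_{ẋ ∈ X/G} on X with supp β^{ẋ} = p⁻¹(ẋ) and ẋ ↦ ∫ f dβ^{ẋ} continuous for all f ∈ C_c(X). Moreover one can take β^{ẋ} to be the pushforward of Haar measure on G under g ↦ g·x for any choice of x ∈ p⁻¹(ẋ), and this is independent of the choice of x up to the modular considerations when G is unimodular. -/

import Mathlib

open MeasureTheory Topology Set

section Aux
variable {G X : Type*} [Group G] [TopologicalSpace G] [IsTopologicalGroup G]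
  [TopologicalSpace X] [MulAction G X] [ContinuousSMul G X]

/-- the set of group elements moving some point of `V` into `K` is compact. -/
lemma aux_compact17 (hproper : IsProperMap (fun p : G × X => (p.1 • p.2, p.2)))
    {K : Set X} (hK : IsCompact K) {V : Set X} (hV : IsCompact V) :
    IsCompact {g : G | ∃ x ∈ V, g • x ∈ K} := by
  have h1 : IsCompact ((fun p : G × X => (p.1 • p.2, p.2)) ⁻¹' (K ×ˢ V)) :=
    hproper.isCompact_preimage (hK.prod hV)
  have h2 : {g : G | ∃ x ∈ V, g • x ∈ K}
      = Prod.fst '' ((fun p : G × X => (p.1 • p.2, p.2)) ⁻¹' (K ×ˢ V)) := by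
    ext g
    constructor
    · rintro ⟨x, hx, hgx⟩
      exact ⟨(g, x), ⟨hgx, hx⟩, rfl⟩
    · rintro ⟨⟨g', x⟩, ⟨h1, h2⟩, rfl⟩
      exact ⟨x, h2, h1⟩
  rw [h2]
  exact h1.image continuous_fst

lemma aux_orbit_closed17 (hproper : IsProperMap (fun p : G × X => (p.1 • p.2, p.2)))
    (x : X) : IsClosed (MulAction.orbit G x) := by
  have h1 : IsClosed (Set.range (fun p : G × X => (p.1 • p.2, p.2))) :=
    hproper.isClosedMap.isClosed_range
  have h2 : MulAction.orbit G x
      = (fun y : X => (y, x)) ⁻¹' (Set.range (fun p : G × X => (p.1 • p.2, p.2))) := by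
    ext y
    constructor
    · rintro ⟨g, rfl⟩; exact ⟨(g, x), rfl⟩
    · rintro ⟨⟨g, z⟩, hp⟩
      rw [Prod.ext_iff] at hp
      obtain ⟨h1, h2⟩ := hp
      dsimp at h1 h2
      subst h2
      exact ⟨g, h1⟩
  rw [h2]
  exact h1.preimage (by fun_prop)
end Aux

lemma aux_cont17 {G X : Type*} [Group G] [TopologicalSpace G] [IsTopologicalGroup G]
    [T2Space G] [MeasurableSpace G] [BorelSpace G]
    [TopologicalSpace X] [LocallyCompactSpace X] [T2Space X] [SecondCountableTopology X]
    [MulAction G X] [ContinuousSMul G X]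
    (hproper : IsProperMap (fun p : G × X => (p.1 • p.2, p.2)))
    (lam : Measure G) [IsFiniteMeasureOnCompacts lam]
    (f : X → ℝ) (hf : Continuous f) (hcf : HasCompactSupport f) :
    Continuous fun x : X => ∫ g, f (g • x) ∂lam := by
  rw [continuous_iff_continuousAt]
  intro x₀
  obtain ⟨V, hVcomp, hVmem⟩ := exists_compact_mem_nhds x₀
  obtain ⟨C, hC⟩ := hf.bounded_above_of_compact_support hcf
  have hC0 : 0 ≤ C := le_trans (norm_nonneg _) (hC x₀)
  set L := {g : G | ∃ x ∈ V, g • x ∈ tsupport f} with hLdef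
  have hL : IsCompact L := aux_compact17 hproper hcf hVcomp
  apply tendsto_integral_filter_of_dominated_convergence (bound := L.indicator fun _ => C)
  · exact Filter.Eventually.of_forall fun x =>
      ((hf.comp (continuous_id.smul continuous_const)).aestronglyMeasurable)
  · filter_upwards [hVmem] with x hx
    apply Filter.Eventually.of_forall
    intro g
    by_cases hg : g ∈ L
    · rw [Set.indicator_of_mem hg]
      exact hC _
    · rw [Set.indicator_of_notMem hg]
      have : g • x ∉ tsupport f := fun h => hg ⟨x, hx, h⟩
      rw [image_eq_zero_of_notMem_tsupport this, norm_zero]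
  · exact (integrableOn_const hL.measure_lt_top.ne).integrable_indicator
      hL.isClosed.measurableSet
  · exact Filter.Eventually.of_forall fun g =>
      ((hf.comp (continuous_const.smul continuous_id)).tendsto x₀)

theorem stmt17 {G X : Type*} [Group G] [TopologicalSpace G] [IsTopologicalGroup G]
    [LocallyCompactSpace G] [T2Space G] [SecondCountableTopology G]
    [MeasurableSpace G] [BorelSpace G]
    [TopologicalSpace X] [LocallyCompactSpace X] [T2Space X] [SecondCountableTopology X]
    [MeasurableSpace X] [BorelSpace X]
    [MulAction G X] [ContinuousSMul G X]
    (hfree : ∀ (g : G) (x : X), g • x = x → g = 1)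
    (hproper : IsProperMap (fun p : G × X => (p.1 • p.2, p.2)))
    (lam : Measure G) [lam.IsHaarMeasure] [lam.IsMulRightInvariant] :
    ∃ β : Quotient (MulAction.orbitRel G X) → Measure X,
      (∀ x : X, β (Quotient.mk (MulAction.orbitRel G X) x) =
        Measure.map (fun g : G => g • x) lam) ∧
      (∀ q, (β q).Regular) ∧
      (∀ q, β q (((Quotient.mk (MulAction.orbitRel G X)) ⁻¹' {q})ᶜ) = 0) ∧
      (∀ q, ∀ U : Set X, IsOpen U →
        (U ∩ (Quotient.mk (MulAction.orbitRel G X)) ⁻¹' {q}).Nonempty → 0 < β q U) ∧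
      (∀ f : X → ℝ, Continuous f → HasCompactSupport f →
        Continuous fun q => ∫ x, f x ∂(β q)) := by
  classical
  -- well-definedness
  have hwd : ∀ a b : X, MulAction.orbitRel G X a b →
      Measure.map (fun g : G => g • a) lam = Measure.map (fun g : G => g • b) lam := by
    intro a b hab
    rw [MulAction.orbitRel_apply] at hab
    obtain ⟨g, rfl⟩ := hab
    have hcomp : (fun h : G => h • ((g : G) • b)) = (fun h : G => h • b) ∘ (fun h => h * g) := by
      funext h; simp [mul_smul]
    rw [hcomp, ← Measure.map_map (by fun_prop : Measurable fun h : G => h • b)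
      (measurable_mul_const (g : G)), MeasureTheory.map_mul_right_eq_self]
  set β : Quotient (MulAction.orbitRel G X) → Measure X :=
    Quotient.lift (fun x => Measure.map (fun g : G => g • x) lam) hwd with hβ
  -- compactness of preimages under orbit maps
  have hpre : ∀ (x : X) (K : Set X), IsCompact K → IsCompact ((fun g : G => g • x) ⁻¹' K) := by
    intro x K hK
    have := aux_compact17 hproper hK isCompact_singleton (V := {x})
    convert this using 1
    ext g; simp
  -- orbit description of fibers
  have hfib : ∀ x : X, (Quotient.mk (MulAction.orbitRel G X)) ⁻¹' {Quotient.mk _ x}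
      = MulAction.orbit G x := by
    intro x
    ext y
    simp only [Set.mem_preimage, Set.mem_singleton_iff, Quotient.eq]
    exact MulAction.orbitRel_apply
  refine ⟨β, fun x => rfl, ?_, ?_, ?_, ?_⟩
  · -- regularity
    intro q
    induction q using Quotient.ind with
    | _ x =>
      show (Measure.map (fun g : G => g • x) lam).Regular
      haveI : IsFiniteMeasureOnCompacts (Measure.map (fun g : G => g • x) lam) := by
        constructor
        intro K hK
        rw [Measure.map_apply (by fun_prop) hK.isClosed.measurableSet]
        exact (hpre x K hK).measure_lt_top
      infer_instance
  · -- support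
    intro q
    induction q using Quotient.ind with
    | _ x =>
      show Measure.map (fun g : G => g • x) lam _ = 0
      rw [hfib x, Measure.map_apply (by fun_prop)
        (aux_orbit_closed17 hproper x).measurableSet.compl]
      convert measure_empty
      · ext g
        simp only [Set.mem_preimage, Set.mem_compl_iff, Set.mem_empty_iff_false, iff_false,
          not_not]
        exact ⟨g, rfl⟩
      · infer_instance
  · -- positivity on opens meeting the fiber
    intro q U hU hne
    induction q using Quotient.ind with
    | _ x =>
      show 0 < Measure.map (fun g : G => g • x) lam U
      rw [Measure.map_apply (by fun_prop) hU.measurableSet]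
      apply (hU.preimage (by fun_prop : Continuous fun g : G => g • x)).measure_pos lam
      obtain ⟨y, hyU, hyfib⟩ := hne
      rw [hfib x] at hyfib
      obtain ⟨g, rfl⟩ := hyfib
      exact ⟨g, hyU⟩
  · -- continuity
    intro f hf hcf
    letI : Setoid X := MulAction.orbitRel G X
    rw [(isQuotientMap_quotient_mk' (s := MulAction.orbitRel G X)).continuous_iff]
    have : ((fun q => ∫ y, f y ∂(β q)) ∘ (Quotient.mk' : X → Quotient (MulAction.orbitRel G X))) = fun x : X => ∫ g, f (g • x) ∂lam := by
      funext x
      show ∫ y, f y ∂(Measure.map (fun g : G => g • x) lam) = _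
      exact integral_map (by fun_prop : Measurable fun g : G => g • x).aemeasurable
        hf.aestronglyMeasurable
    rw [this]
    exact aux_cont17 hproper lam f hf hcf
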